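/- Let n, m, p ∈ ℕ and let A1 ∈ ℝ^{n×n}, A2 ∈ ℝ^{n×p}, A3 ∈ ℝ^{n×m}, Ω1 ∈ ℝ^{p×n}, Ω2 ∈ ℝ^{p×p}, Ω3 ∈ ℝ^{p×m} be real matrices. Let X, Q̃_x, Q̃_e ∈ ℝ^{n×n} and Q̃_π, Q̃_δ ∈ ℝ^{p×p} be symmetric positive definite, let Z̃ ∈ ℝ^{p×p} be invertible, and let K̃ ∈ ℝ^{m×n}, L̃ ∈ ℝ^{m×p}. Let Φ be the symmetric block matrix with row/column block sizes (n, n, p, p, n, n, p), upper-triangular blocks: (1,1) = −X, (1,2) = 0, (1,3) = XΩ1ᵀ + K̃ᵀΩ3ᵀ, (1,4) = 0, (1,5) = XA1ᵀ + K̃ᵀA3ᵀ, (1,6) = X, (1,7) = 0; (2,2) = −Q̃_e, (2,3) = K̃ᵀΩ3ᵀ, (2,4) = 0, (2,5) = K̃ᵀA3ᵀ, (2,6) = 0, (2,7) = 0; (3,3) = (Ω2Z̃ + Ω3L̃) + (Ω2Z̃ + Ω3L̃)ᵀ, (3,4) = Ω3L̃, (3,5) = Z̃ᵀA2ᵀ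 + L̃ᵀA3ᵀ, (3,6) = 0, (3,7) = Z̃ᵀ; (4,4) = −Q̃_δ, (4,5) = L̃ᵀA3ᵀ, (4,6) = 0, (4,7) = 0; (5,5) = −X, (5,6) = 0, (5,7) = 0; (6,6) = −Q̃_x, (6,7) = 0; (7,7) = −Q̃_π, and lower blocks deduced by symmetry. If ζᵀΦζ < 0 for all ζ ≠ 0, then, setting P = X⁻¹, Z = (Z̃⁻¹)ᵀ, K = K̃X⁻¹, L = L̃Z̃⁻¹, Q_x = Q̃_x⁻¹, Q_e = X⁻¹Q̃_e X⁻¹, Q_π = Q̃_π⁻¹, Q_δ = (Z̃⁻¹)ᵀQ̃_δ Z̃⁻¹, the matrix Ψ built from these matrices (the symmetric block matrix with block sizes (n, n, p, p) and blocks Ψ11 = A_KᵀPA_K − P + Q_x, Ψ12 = A_KᵀPA3K, Ψ13 = A_KᵀPA_L + Ω_KᵀZᵀ, Ψ14 = A_KᵀPA3L, Ψ22 = KᵀA3ᵀPA3K − Q_e, Ψ23 = KᵀA3ᵀPA_L + KᵀΩ3ᵀZᵀ, Ψ24 = KᵀA3ᵀPA3L, Ψ33 = ZΩ_L + Ω_LᵀZᵀ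 + A_LᵀPA_L + Q_π, Ψ34 = A_LᵀPA3L + ZΩ3L, Ψ44 = LᵀA3ᵀPA3L − Q_δ, where A_K = A1 + A3K, Ω_K = Ω1 + Ω3K, A_L = A2 + A3L, Ω_L = Ω2 + Ω3L) satisfies ζᵀΨζ < 0 for all ζ ≠ 0. -/

import Mathlib

open Matrix

/-- The symmetric design block matrix `Φ` of inequality (16) of the paper,
with row/column block sizes `(n, n, p, p, n, n, p)`. -/
noncomputable def PhiMatrix {n m p : ℕ}
    (A1 : Matrix (Fin n) (Fin n) ℝ) (A2 : Matrix (Fin n) (Fin p) ℝ)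
    (A3 : Matrix (Fin n) (Fin m) ℝ)
    (Ω1 : Matrix (Fin p) (Fin n) ℝ) (Ω2 : Matrix (Fin p) (Fin p) ℝ)
    (Ω3 : Matrix (Fin p) (Fin m) ℝ)
    (Kt : Matrix (Fin m) (Fin n) ℝ) (Lt : Matrix (Fin m) (Fin p) ℝ)
    (Zt : Matrix (Fin p) (Fin p) ℝ)
    (Qtx Qte X : Matrix (Fin n) (Fin n) ℝ) (Qtπ Qtδ : Matrix (Fin p) (Fin p) ℝ) :
    Matrix (((Fin n ⊕ Fin n) ⊕ (Fin p ⊕ Fin p)) ⊕ ((Fin n ⊕ Fin n) ⊕ Fin p))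
           (((Fin n ⊕ Fin n) ⊕ (Fin p ⊕ Fin p)) ⊕ ((Fin n ⊕ Fin n) ⊕ Fin p)) ℝ :=
  let Φ11 : Matrix (Fin n) (Fin n) ℝ := -X
  let Φ12 : Matrix (Fin n) (Fin n) ℝ := 0
  let Φ13 : Matrix (Fin n) (Fin p) ℝ := X * Ω1ᵀ + Ktᵀ * Ω3ᵀ
  let Φ14 : Matrix (Fin n) (Fin p) ℝ := 0
  let Φ15 : Matrix (Fin n) (Fin n) ℝ := X * A1ᵀ + Ktᵀ * A3ᵀ
  let Φ16 : Matrix (Fin n) (Fin n) ℝ := X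
  let Φ17 : Matrix (Fin n) (Fin p) ℝ := 0
  let Φ22 : Matrix (Fin n) (Fin n) ℝ := -Qte
  let Φ23 : Matrix (Fin n) (Fin p) ℝ := Ktᵀ * Ω3ᵀ
  let Φ24 : Matrix (Fin n) (Fin p) ℝ := 0
  let Φ25 : Matrix (Fin n) (Fin n) ℝ := Ktᵀ * A3ᵀ
  let Φ26 : Matrix (Fin n) (Fin n) ℝ := 0
  let Φ27 : Matrix (Fin n) (Fin p) ℝ := 0
  let Φ33 : Matrix (Fin p) (Fin p) ℝ := (Ω2 * Zt + Ω3 * Lt) + (Ω2 * Zt + Ω3 * Lt)ᵀ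
  let Φ34 : Matrix (Fin p) (Fin p) ℝ := Ω3 * Lt
  let Φ35 : Matrix (Fin p) (Fin n) ℝ := Ztᵀ * A2ᵀ + Ltᵀ * A3ᵀ
  let Φ36 : Matrix (Fin p) (Fin n) ℝ := 0
  let Φ37 : Matrix (Fin p) (Fin p) ℝ := Ztᵀ
  let Φ44 : Matrix (Fin p) (Fin p) ℝ := -Qtδ
  let Φ45 : Matrix (Fin p) (Fin n) ℝ := Ltᵀ * A3ᵀ
  let Φ46 : Matrix (Fin p) (Fin n) ℝ := 0
  let Φ47 : Matrix (Fin p) (Fin p) ℝ := 0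
  let Φ55 : Matrix (Fin n) (Fin n) ℝ := -X
  let Φ56 : Matrix (Fin n) (Fin n) ℝ := 0
  let Φ57 : Matrix (Fin n) (Fin p) ℝ := 0
  let Φ66 : Matrix (Fin n) (Fin n) ℝ := -Qtx
  let Φ67 : Matrix (Fin n) (Fin p) ℝ := 0
  let Φ77 : Matrix (Fin p) (Fin p) ℝ := -Qtπ
  let B : Matrix ((Fin n ⊕ Fin n) ⊕ (Fin p ⊕ Fin p)) ((Fin n ⊕ Fin n) ⊕ Fin p) ℝ :=
    Matrix.fromBlocks
      (Matrix.fromBlocks Φ15 Φ16 Φ25 Φ26) (Matrix.fromRows Φ17 Φ27)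
      (Matrix.fromBlocks Φ35 Φ36 Φ45 Φ46) (Matrix.fromRows Φ37 Φ47)
  Matrix.fromBlocks
    (Matrix.fromBlocks
      (Matrix.fromBlocks Φ11 Φ12 Φ12ᵀ Φ22)
      (Matrix.fromBlocks Φ13 Φ14 Φ23 Φ24)
      (Matrix.fromBlocks Φ13ᵀ Φ23ᵀ Φ14ᵀ Φ24ᵀ)
      (Matrix.fromBlocks Φ33 Φ34 Φ34ᵀ Φ44))
    B
    Bᵀ
    (Matrix.fromBlocks
      (Matrix.fromBlocks Φ55 Φ56 Φ56ᵀ Φ66)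
      (Matrix.fromRows Φ57 Φ67)
      (Matrix.fromRows Φ57 Φ67)ᵀ
      Φ77)

/-- The symmetric analysis block matrix `Ψ` of inequality (20) of the paper,
with row/column block sizes `(n, n, p, p)`. -/
noncomputable def PsiMatrix {n m p : ℕ}
    (A1 : Matrix (Fin n) (Fin n) ℝ) (A2 : Matrix (Fin n) (Fin p) ℝ)
    (A3 : Matrix (Fin n) (Fin m) ℝ)
    (Ω1 : Matrix (Fin p) (Fin n) ℝ) (Ω2 : Matrix (Fin p) (Fin p) ℝ)
    (Ω3 : Matrix (Fin p) (Fin m) ℝ)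
    (K : Matrix (Fin m) (Fin n) ℝ) (L : Matrix (Fin m) (Fin p) ℝ)
    (Z : Matrix (Fin p) (Fin p) ℝ) (P : Matrix (Fin n) (Fin n) ℝ)
    (Qx Qe : Matrix (Fin n) (Fin n) ℝ) (Qπ Qδ : Matrix (Fin p) (Fin p) ℝ) :
    Matrix ((Fin n ⊕ Fin n) ⊕ (Fin p ⊕ Fin p)) ((Fin n ⊕ Fin n) ⊕ (Fin p ⊕ Fin p)) ℝ :=
  let AK := A1 + A3 * K
  let ΩK := Ω1 + Ω3 * K
  let AL := A2 + A3 * L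
  let ΩL := Ω2 + Ω3 * L
  let Ψ11 := AKᵀ * P * AK - P + Qx
  let Ψ12 := AKᵀ * P * (A3 * K)
  let Ψ13 := AKᵀ * P * AL + ΩKᵀ * Zᵀ
  let Ψ14 := AKᵀ * P * (A3 * L)
  let Ψ22 := Kᵀ * A3ᵀ * P * A3 * K - Qe
  let Ψ23 := Kᵀ * A3ᵀ * P * AL + Kᵀ * Ω3ᵀ * Zᵀ
  let Ψ24 := Kᵀ * A3ᵀ * P * (A3 * L)
  let Ψ33 := Z * ΩL + ΩLᵀ * Zᵀ + ALᵀ * P * AL + Qπ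
  let Ψ34 := ALᵀ * P * (A3 * L) + Z * (Ω3 * L)
  let Ψ44 := Lᵀ * A3ᵀ * P * A3 * L - Qδ
  Matrix.fromBlocks
    (Matrix.fromBlocks Ψ11 Ψ12 Ψ12ᵀ Ψ22)
    (Matrix.fromBlocks Ψ13 Ψ14 Ψ23 Ψ24)
    (Matrix.fromBlocks Ψ13ᵀ Ψ23ᵀ Ψ14ᵀ Ψ24ᵀ)
    (Matrix.fromBlocks Ψ33 Ψ34 Ψ34ᵀ Ψ44)


private lemma aux_mulVec_dotProduct {q r : ℕ} (M : Matrix (Fin q) (Fin r) ℝ)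
    (x : Fin r → ℝ) (y : Fin q → ℝ) : (M *ᵥ x) ⬝ᵥ y = x ᵥ* Mᵀ ⬝ᵥ y := by
  rw [Matrix.vecMul_transpose]

set_option maxHeartbeats 2000000 in
/-- Congruence transformations, Schur complements and the change of variables
`P = X⁻¹`, `Z = Z̃⁻ᵀ`, `K = K̃X⁻¹`, `L = L̃Z̃⁻¹`, `Qx = Q̃x⁻¹`, `Qe = X⁻¹Q̃e X⁻¹`,
`Qπ = Q̃π⁻¹`, `Qδ = Z̃⁻ᵀQ̃δ Z̃⁻¹` convert the design LMI `Φ ≺ 0` into the analysis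
inequality `Ψ ≺ 0`. -/
theorem design_lmi_implies_analysis_lmi {n m p : ℕ}
    (A1 : Matrix (Fin n) (Fin n) ℝ) (A2 : Matrix (Fin n) (Fin p) ℝ)
    (A3 : Matrix (Fin n) (Fin m) ℝ)
    (Ω1 : Matrix (Fin p) (Fin n) ℝ) (Ω2 : Matrix (Fin p) (Fin p) ℝ)
    (Ω3 : Matrix (Fin p) (Fin m) ℝ)
    (X Qtx Qte : Matrix (Fin n) (Fin n) ℝ)
    (Qtπ Qtδ : Matrix (Fin p) (Fin p) ℝ)
    (hX : X.PosDef) (hQtx : Qtx.PosDef) (hQte : Qte.PosDef)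
    (hQtπ : Qtπ.PosDef) (hQtδ : Qtδ.PosDef)
    (Zt : Matrix (Fin p) (Fin p) ℝ) (hZt : IsUnit Zt.det)
    (Kt : Matrix (Fin m) (Fin n) ℝ) (Lt : Matrix (Fin m) (Fin p) ℝ)
    (hΦ : ∀ ζ : ((Fin n ⊕ Fin n) ⊕ (Fin p ⊕ Fin p)) ⊕ ((Fin n ⊕ Fin n) ⊕ Fin p) → ℝ,
      ζ ≠ 0 →
      ζ ⬝ᵥ ((PhiMatrix A1 A2 A3 Ω1 Ω2 Ω3 Kt Lt Zt Qtx Qte X Qtπ Qtδ) *ᵥ ζ) < 0) :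
    ∀ ζ : (Fin n ⊕ Fin n) ⊕ (Fin p ⊕ Fin p) → ℝ, ζ ≠ 0 →
      ζ ⬝ᵥ ((PsiMatrix A1 A2 A3 Ω1 Ω2 Ω3 (Kt * X⁻¹) (Lt * Zt⁻¹) (Zt⁻¹)ᵀ X⁻¹
        Qtx⁻¹ (X⁻¹ * Qte * X⁻¹) Qtπ⁻¹ ((Zt⁻¹)ᵀ * Qtδ * Zt⁻¹)) *ᵥ ζ) < 0 := by

  intro ζ hζ
  have hXd : IsUnit X.det := hX.det_pos.ne'.isUnit
  have hQtxd : IsUnit Qtx.det := hQtx.det_pos.ne'.isUnit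
  have hQtπd : IsUnit Qtπ.det := hQtπ.det_pos.ne'.isUnit
  have hZtTd : IsUnit Ztᵀ.det := by rwa [Matrix.det_transpose]
  have hXs : Xᵀ = X := by simpa using hX.1.eq
  have hQtxs : Qtxᵀ = Qtx := by simpa using hQtx.1.eq
  have hQtπs : Qtπᵀ = Qtπ := by simpa using hQtπ.1.eq
  have hQtes : Qteᵀ = Qte := by simpa using hQte.1.eq
  have hQtδs : Qtδᵀ = Qtδ := by simpa using hQtδ.1.eq
  set a : Fin n → ℝ := fun i => ζ (Sum.inl (Sum.inl i)) with ha
  set b : Fin n → ℝ := fun i => ζ (Sum.inl (Sum.inr i)) with hb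
  set c : Fin p → ℝ := fun i => ζ (Sum.inr (Sum.inl i)) with hc
  set d : Fin p → ℝ := fun i => ζ (Sum.inr (Sum.inr i)) with hd
  have hζeq : ζ = Sum.elim (Sum.elim a b) (Sum.elim c d) := by
    funext i; rcases i with (i | i) | (i | i) <;> rfl
  set w : Fin n → ℝ := (A1 + A3 * (Kt * X⁻¹)) *ᵥ a + (A3 * (Kt * X⁻¹)) *ᵥ b
      + (A2 + A3 * (Lt * Zt⁻¹)) *ᵥ c + (A3 * (Lt * Zt⁻¹)) *ᵥ d with hw
  set ζ' : (((Fin n ⊕ Fin n) ⊕ (Fin p ⊕ Fin p)) ⊕ ((Fin n ⊕ Fin n) ⊕ Fin p)) → ℝ :=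
    Sum.elim (Sum.elim (Sum.elim (X⁻¹ *ᵥ a) (X⁻¹ *ᵥ b)) (Sum.elim (Zt⁻¹ *ᵥ c) (Zt⁻¹ *ᵥ d)))
      (Sum.elim (Sum.elim (X⁻¹ *ᵥ w) (Qtx⁻¹ *ᵥ a)) (Qtπ⁻¹ *ᵥ c)) with hζ'def
  have hzero : ζ' ≠ 0 := by
    intro h
    apply hζ
    have hA : X⁻¹ *ᵥ a = 0 := funext fun i => congrFun h (Sum.inl (Sum.inl (Sum.inl i)))
    have hB : X⁻¹ *ᵥ b = 0 := funext fun i => congrFun h (Sum.inl (Sum.inl (Sum.inr i)))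
    have hC : Zt⁻¹ *ᵥ c = 0 := funext fun i => congrFun h (Sum.inl (Sum.inr (Sum.inl i)))
    have hD : Zt⁻¹ *ᵥ d = 0 := funext fun i => congrFun h (Sum.inl (Sum.inr (Sum.inr i)))
    have ha0 : a = 0 := by
      have := congrArg (X *ᵥ ·) hA
      simpa [Matrix.mulVec_mulVec, Matrix.mul_nonsing_inv _ hXd] using this
    have hb0 : b = 0 := by
      have := congrArg (X *ᵥ ·) hB
      simpa [Matrix.mulVec_mulVec, Matrix.mul_nonsing_inv _ hXd] using this
    have hc0 : c = 0 := by
      have := congrArg (Zt *ᵥ ·) hC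
      simpa [Matrix.mulVec_mulVec, Matrix.mul_nonsing_inv _ hZt] using this
    have hd0 : d = 0 := by
      have := congrArg (Zt *ᵥ ·) hD
      simpa [Matrix.mulVec_mulVec, Matrix.mul_nonsing_inv _ hZt] using this
    rw [hζeq, ha0, hb0, hc0, hd0]
    funext i; rcases i with (i | i) | (i | i) <;> rfl
  have hkey : ζ' ⬝ᵥ ((PhiMatrix A1 A2 A3 Ω1 Ω2 Ω3 Kt Lt Zt Qtx Qte X Qtπ Qtδ) *ᵥ ζ')
      = ζ ⬝ᵥ ((PsiMatrix A1 A2 A3 Ω1 Ω2 Ω3 (Kt * X⁻¹) (Lt * Zt⁻¹) (Zt⁻¹)ᵀ X⁻¹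
          Qtx⁻¹ (X⁻¹ * Qte * X⁻¹) Qtπ⁻¹ ((Zt⁻¹)ᵀ * Qtδ * Zt⁻¹)) *ᵥ ζ) := by
    rw [hζeq, hζ'def, hw]
    simp only [PhiMatrix, PsiMatrix,
      Matrix.fromBlocks_mulVec, Matrix.fromRows_mulVec,
      Matrix.fromBlocks_transpose, Matrix.transpose_fromRows, Matrix.fromCols_mulVec_sumElim,
      sumElim_dotProduct_sumElim, Sum.elim_comp_inl, Sum.elim_comp_inr,
      Matrix.fromRows_mul, Matrix.sumElim_vecMul_fromRows, Matrix.fromRows_zero, Matrix.fromCols_zero,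
      Matrix.add_mulVec, Matrix.sub_mulVec, Matrix.neg_mulVec, Matrix.zero_mulVec,
      Matrix.mulVec_add, Matrix.mulVec_neg, Matrix.mulVec_zero, Matrix.mulVec_mulVec,
      dotProduct_add, add_dotProduct, dotProduct_neg, neg_dotProduct,
      dotProduct_zero, zero_dotProduct, dotProduct_sub, sub_dotProduct,
      Matrix.dotProduct_mulVec, aux_mulVec_dotProduct, Matrix.vecMul_vecMul, Matrix.vecMul_mulVec,
      Matrix.add_vecMul, Matrix.vecMul_add, Matrix.vecMul_zero, Matrix.zero_vecMul,
      Matrix.neg_vecMul, Matrix.vecMul_neg, Matrix.vecMul_one, Matrix.vecMul_sub, Matrix.sub_vecMul,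
      Matrix.transpose_mul, Matrix.transpose_add, Matrix.transpose_neg, Matrix.transpose_transpose,
      Matrix.transpose_zero, Matrix.transpose_nonsing_inv,
      hXs, hQtxs, hQtπs, hQtes, hQtδs,
      Matrix.mul_add, Matrix.add_mul, Matrix.mul_assoc, Matrix.mul_one, Matrix.one_mul,
      Matrix.mul_zero, Matrix.zero_mul, Matrix.neg_mul, Matrix.mul_neg,
      Matrix.sub_mul, Matrix.mul_sub,
      Matrix.nonsing_inv_mul X hXd, Matrix.mul_nonsing_inv X hXd,
      Matrix.nonsing_inv_mul Qtx hQtxd, Matrix.mul_nonsing_inv Qtx hQtxd,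
      Matrix.nonsing_inv_mul Qtπ hQtπd, Matrix.mul_nonsing_inv Qtπ hQtπd,
      Matrix.nonsing_inv_mul Zt hZt, Matrix.mul_nonsing_inv Zt hZt,
      Matrix.nonsing_inv_mul Ztᵀ hZtTd, Matrix.mul_nonsing_inv Ztᵀ hZtTd,
      Matrix.nonsing_inv_mul_cancel_left X (h := hXd),
      Matrix.mul_nonsing_inv_cancel_left X (h := hXd),
      Matrix.nonsing_inv_mul_cancel_left Qtx (h := hQtxd),
      Matrix.mul_nonsing_inv_cancel_left Qtx (h := hQtxd),
      Matrix.nonsing_inv_mul_cancel_left Qtπ (h := hQtπd),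
      Matrix.mul_nonsing_inv_cancel_left Qtπ (h := hQtπd),
      Matrix.nonsing_inv_mul_cancel_left Zt (h := hZt),
      Matrix.mul_nonsing_inv_cancel_left Zt (h := hZt),
      Matrix.nonsing_inv_mul_cancel_left Ztᵀ (h := hZtTd),
      Matrix.mul_nonsing_inv_cancel_left Ztᵀ (h := hZtTd)]
    ring
  have hlt := hΦ ζ' hzero
  rw [hkey] at hlt
  exact hlt
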